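/- With notation as above, the second derivative ü = ∂²u/∂t² at t = 0 satisfies (Δ - 2)ü = 32‖q‖², i.e. ü = -16·D(‖q‖²) where D = -2(Δ-2)^{-1}. Consequently, the second derivative at t = 0 of the area functional 𝒜(t) = -∫_Σ e^{u(t)} dA equals 16∫_Σ ‖q‖² dA. -/
import Mathlib


open MeasureTheory

/-- For a smooth family `γ(t) = (u(t), t)` of solutions of the
structure equation with `u(0) = 0` and `u̇(0) = 0`, the second derivative
`ü = ∂²u/∂t²|_{t=0}` satisfies `(Δ - 2)ü = 32‖q‖²`; consequently the area
functional `𝒜(t) = -∫ e^{u(t)} dA` satisfies `𝒜''(0) = 16∫‖q‖² dA`.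
Here `du t = ∂u/∂t`, `w2 = ü(0)`, `dΔu t = ∂(Δu)/∂t`, `Δw2 = Δü(0)` (commuting
`Δ` with `∂/∂t`), `∫ Δw2 = 0` encodes closedness, and
`Acc = 𝒜''(0) = -∫(ü + u̇²)e^{u(0)}` is the second derivative of the area. -/
theorem stmt15
    (S : Type*) [MeasurableSpace S] (μ : Measure S) [IsFiniteMeasure μ]
    (u du Δu dΔu : ℝ → S → ℝ) (w2 Δw2 q2 : S → ℝ) (Acc : ℝ)
    (hq2 : ∀ x, 0 ≤ q2 x)
    (hu0 : ∀ x, u 0 x = 0)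
    (hdu0 : ∀ x, du 0 x = 0)
    (hderiv : ∀ t x, HasDerivAt (fun τ => u τ x) (du t x) t)
    (hderiv2 : ∀ x, HasDerivAt (fun t => du t x) (w2 x) 0)
    (hΔderiv : ∀ t x, HasDerivAt (fun τ => Δu τ x) (dΔu t x) t)
    (hΔderiv2 : ∀ x, HasDerivAt (fun t => dΔu t x) (Δw2 x) 0)
    (hw2 : Integrable w2 μ) (hΔw2 : Integrable Δw2 μ) (hq2i : Integrable q2 μ)
    (hΔint : ∫ x, Δw2 x ∂μ = 0)
    (hAcc : Acc = -∫ x, (w2 x + (du 0 x) ^ 2) * Real.exp (u 0 x) ∂μ)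
    (heq : ∀ t x, Δu t x + 2 - 2 * Real.exp (u t x)
      - 16 * t ^ 2 * q2 x * Real.exp (-2 * u t x) = 0) :
    (∀ x, Δw2 x - 2 * w2 x = 32 * q2 x) ∧ Acc = 16 * ∫ x, q2 x ∂μ := by
  -- First derivative of the structure equation vanishes identically.
  have hg : ∀ t x, dΔu t x - 2 * Real.exp (u t x) * du t x
      - 32 * t * q2 x * Real.exp (-2 * u t x)
      + 32 * t ^ 2 * q2 x * Real.exp (-2 * u t x) * du t x = 0 := by
    intro t x
    have E1 : HasDerivAt (fun τ => Real.exp (u τ x))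
        (Real.exp (u t x) * du t x) t := (hderiv t x).exp
    have E2 : HasDerivAt (fun τ => Real.exp (-2 * u τ x))
        (Real.exp (-2 * u t x) * (-2 * du t x)) t :=
      ((hderiv t x).const_mul (-2)).exp
    have hF := (((hΔderiv t x).add_const 2).sub (E1.const_mul 2)).sub
      ((((hasDerivAt_pow 2 t).const_mul 16).mul_const (q2 x)).mul E2)
    have hF0 := hF.congr_of_eventuallyEq
      (Filter.Eventually.of_forall fun τ => (heq τ x).symm)
    have h0 := hF0.unique (hasDerivAt_const t 0)
    push_cast at h0
    linear_combination h0
  -- Second derivative: differentiate `hg` at 0.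
  have key : ∀ x, Δw2 x - 2 * w2 x = 32 * q2 x := by
    intro x
    have E1 : HasDerivAt (fun t => Real.exp (u t x))
        (Real.exp (u 0 x) * du 0 x) 0 := (hderiv 0 x).exp
    have E2 : HasDerivAt (fun t => Real.exp (-2 * u t x))
        (Real.exp (-2 * u 0 x) * (-2 * du 0 x)) 0 :=
      ((hderiv 0 x).const_mul (-2)).exp
    have t2 := (E1.const_mul 2).mul (hderiv2 x)
    have t3 := (((hasDerivAt_id (0:ℝ)).const_mul 32).mul_const (q2 x)).mul E2
    have t4 := ((((hasDerivAt_pow 2 (0:ℝ)).const_mul 32).mul_const (q2 x)).mul E2).mul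
      (hderiv2 x)
    have hG := (((hΔderiv2 x).sub t2).sub t3).add t4
    have hG0 := hG.congr_of_eventuallyEq
      (Filter.Eventually.of_forall fun t => (hg t x).symm)
    have h0 := hG0.unique (hasDerivAt_const 0 0)
    rw [hu0 x, hdu0 x] at h0
    push_cast at h0
    simp [Real.exp_zero] at h0
    linarith
  refine ⟨key, ?_⟩
  have hweq : ∀ x, w2 x = Δw2 x / 2 - 16 * q2 x := by
    intro x; have := key x; linarith
  have hInt : ∫ x, w2 x ∂μ = ∫ x, (Δw2 x / 2 - 16 * q2 x) ∂μ :=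
    integral_congr_ae (Filter.Eventually.of_forall hweq)
  have hInt2 : ∫ x, (Δw2 x / 2 - 16 * q2 x) ∂μ
      = (∫ x, Δw2 x ∂μ) / 2 - 16 * ∫ x, q2 x ∂μ := by
    rw [integral_sub (hΔw2.div_const 2) (hq2i.const_mul 16),
      integral_div, integral_const_mul]
  have hAcc' : Acc = -∫ x, w2 x ∂μ := by
    rw [hAcc]
    congr 1
    apply integral_congr_ae
    apply Filter.Eventually.of_forall
    intro x
    simp [hu0 x, hdu0 x]
  rw [hAcc', hInt, hInt2, hΔint]
  ring
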